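/- arXiv:1004.0206 — 2 statements merged into one kernel-verified Lean document; each statement's English description precedes it below -/
import Mathlib

section
/- Let φ: W → W′ be a weak isomorphism of cellular algebras. Then for every matrix R in W, tr(φ(R)) = tr(R). -/
open Matrix BigOperators
open scoped Classical

/-- The all-ones matrix `J`. -/
def matJ (V : Type*) : Matrix V V ℂ := Matrix.of fun _ _ => (1 : ℂ)

/-- A matrix with all entries in `{0,1}`. -/
def Is01 {V : Type*} (M : Matrix V V ℂ) : Prop := ∀ i j, M i j = 0 ∨ M i j = 1

/-- A cellular algebra: a subalgebra of `Mat_V` closed under Hadamard multiplication and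
conjugate transpose, containing `I` (automatic) and `J`. -/
def IsCellular {V : Type*} [Fintype V] [DecidableEq V]
    (W : Subalgebra ℂ (Matrix V V ℂ)) : Prop :=
  (∀ A B : Matrix V V ℂ, A ∈ W → B ∈ W → A ⊙ B ∈ W) ∧
  (∀ A : Matrix V V ℂ, A ∈ W → Aᴴ ∈ W) ∧
  matJ V ∈ W

/-- `B` is a vector-space basis of `W` consisting of 0-1 matrices. -/
def Is01Basis {V : Type*} [Fintype V] [DecidableEq V]
    (W : Subalgebra ℂ (Matrix V V ℂ)) (B : Finset (Matrix V V ℂ)) : Prop :=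
  (∀ R ∈ B, Is01 R) ∧
  LinearIndependent ℂ (fun x : {M : Matrix V V ℂ // M ∈ B} => x.val) ∧
  Submodule.span ℂ (B : Set (Matrix V V ℂ)) = Subalgebra.toSubmodule W

/-- The diagonal 0-1 indicator matrix `I_X` of a subset `X ⊆ V`. -/
def cellInd {V : Type*} [DecidableEq V] (X : Finset V) : Matrix V V ℂ :=
  Matrix.of fun i j => if i = j ∧ i ∈ X then (1 : ℂ) else 0

/-- A weak isomorphism of cellular algebras: a bijection `W → W'` preserving addition, scalar
multiplication, matrix multiplication, Hadamard multiplication and conjugate transpose. -/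
def IsWeakIso {V V' : Type*} [Fintype V] [DecidableEq V] [Fintype V'] [DecidableEq V']
    (W : Subalgebra ℂ (Matrix V V ℂ)) (W' : Subalgebra ℂ (Matrix V' V' ℂ))
    (φ : Matrix V V ℂ → Matrix V' V' ℂ) : Prop :=
  Set.BijOn φ (W : Set (Matrix V V ℂ)) (W' : Set (Matrix V' V' ℂ)) ∧
  (∀ A ∈ W, ∀ B ∈ W, φ (A + B) = φ A + φ B) ∧
  (∀ (c : ℂ), ∀ A ∈ W, φ (c • A) = c • φ A) ∧
  (∀ A ∈ W, ∀ B ∈ W, φ (A * B) = φ A * φ B) ∧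
  (∀ A ∈ W, ∀ B ∈ W, φ (A ⊙ B) = φ A ⊙ φ B) ∧
  (∀ A ∈ W, φ Aᴴ = (φ A)ᴴ)


lemma matJ_hadamard {V : Type*} (M : Matrix V V ℂ) : matJ V ⊙ M = M := by
  ext i j; simp [matJ, Matrix.hadamard]

lemma hadamard_matJ {V : Type*} (M : Matrix V V ℂ) : M ⊙ matJ V = M := by
  ext i j; simp [matJ, Matrix.hadamard]

lemma trace_key {V : Type*} [Fintype V] [DecidableEq V] (M : Matrix V V ℂ) :
    matJ V * ((1 : Matrix V V ℂ) ⊙ M) * matJ V = M.trace • matJ V := by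
  ext i j
  simp [matJ, Matrix.mul_apply, Matrix.hadamard, Matrix.one_apply, Matrix.trace,
    Matrix.diag, Matrix.smul_apply, Finset.sum_ite_eq, ite_mul, Finset.mul_sum]

/-- weak isomorphisms preserve the trace. -/
theorem weakIso_trace {V V' : Type*} [Fintype V] [DecidableEq V] [Fintype V'] [DecidableEq V']
    (W : Subalgebra ℂ (Matrix V V ℂ)) (W' : Subalgebra ℂ (Matrix V' V' ℂ))
    (hW : IsCellular W) (hW' : IsCellular W')
    (φ : Matrix V V ℂ → Matrix V' V' ℂ) (hφ : IsWeakIso W W' φ) :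
    ∀ R ∈ W, (φ R).trace = R.trace := by
  intro R hR
  obtain ⟨hbij, hadd, hsmul, hmul, hhad, hconj⟩ := hφ
  have hJ : matJ V ∈ W := hW.2.2
  have hJ' : matJ V' ∈ W' := hW'.2.2
  -- φ J = J'
  have hJim : φ (matJ V) = matJ V' := by
    obtain ⟨B, hB, hBJ⟩ := hbij.surjOn hJ'
    have h1 : matJ V ⊙ B = B := matJ_hadamard B
    have h2 : φ (matJ V) ⊙ matJ V' = φ (matJ V) := hadamard_matJ _
    calc φ (matJ V) = φ (matJ V) ⊙ matJ V' := h2.symm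
      _ = φ (matJ V) ⊙ φ B := by rw [hBJ]
      _ = φ (matJ V ⊙ B) := (hhad _ hJ _ hB).symm
      _ = matJ V' := by rw [h1, hBJ]
  -- φ 1 = 1
  have h1W : (1 : Matrix V V ℂ) ∈ W := W.one_mem
  have h1im : φ (1 : Matrix V V ℂ) = 1 := by
    obtain ⟨A, hA, hA1⟩ := hbij.surjOn (W'.one_mem)
    calc φ (1 : Matrix V V ℂ) = φ 1 * 1 := (mul_one _).symm
      _ = φ 1 * φ A := by rw [hA1]
      _ = φ (1 * A) := (hmul _ h1W _ hA).symm
      _ = 1 := by rw [one_mul, hA1]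
  have hD : (1 : Matrix V V ℂ) ⊙ R ∈ W := hW.1 _ _ h1W hR
  have hL : matJ V * ((1 : Matrix V V ℂ) ⊙ R) * matJ V ∈ W :=
    W.mul_mem (W.mul_mem hJ hD) hJ
  have key : φ (matJ V * ((1 : Matrix V V ℂ) ⊙ R) * matJ V)
      = (φ R).trace • matJ V' := by
    rw [hmul _ (W.mul_mem hJ hD) _ hJ, hmul _ hJ _ hD, hJim, hhad _ h1W _ hR, h1im]
    exact trace_key (φ R)
  have key2 : φ (matJ V * ((1 : Matrix V V ℂ) ⊙ R) * matJ V)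
      = R.trace • matJ V' := by
    rw [trace_key R, hsmul _ _ hJ, hJim]
  rcases isEmpty_or_nonempty V' with hE | hN
  · -- V' empty forces V empty
    have : Subsingleton (Matrix V' V' ℂ) := by
      constructor; intro a b; ext i j; exact (hE.false i).elim
    have h10 : (1 : Matrix V V ℂ) = 0 :=
      hbij.injOn h1W W.zero_mem (Subsingleton.elim _ _)
    have : IsEmpty V := by
      by_contra h
      rw [not_isEmpty_iff] at h
      obtain ⟨i⟩ := h
      have := congrFun (congrFun h10 i) i
      simp [Matrix.one_apply] at this
    rw [Matrix.trace, Matrix.trace]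
    simp
  · obtain ⟨i⟩ := hN
    have := key.symm.trans key2
    have := congrFun (congrFun this i) i
    simpa [matJ, Matrix.smul_apply] using this
end

section
/- Let H, H′ be Hamiltonians in cellular algebras W, W′ with a weak isomorphism φ: W → W′ satisfying φ(H) = H′. Writing e^{−itH} = Σ_{R∈R} x_R(t)·R over basis relations R of W, the Green's function values of H′ are exactly {x_R(t)}, with e^{−itH′} = Σ_{R∈R} x_R(t)·φ(R); moreover each value x_R(t) occurs with the same multiplicity m_R = tr(R R^T) = tr(φ(R) φ(R)^T) for both. -/
open Matrix BigOperators
open scoped Classical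

/-- Auxiliary: trace of `M * Mᵀ` for a 0-1 matrix is the sum of its entries. -/
theorem aux_trace_mul_transpose_01 {V : Type*} [Fintype V] (M : Matrix V V ℂ) (hM : Is01 M) :
    (M * Mᵀ).trace = ∑ i, ∑ j, M i j := by
  rw [Matrix.trace]
  simp only [Matrix.diag, Matrix.mul_apply, Matrix.transpose_apply]
  refine Finset.sum_congr rfl fun i _ => Finset.sum_congr rfl fun j _ => ?_
  rcases hM i j with h | h <;> rw [h] <;> ring

/-- Auxiliary: `J * M * J = (sum of entries of M) • J`. -/
theorem aux_matJ_mul_matJ {V : Type*} [Fintype V] (M : Matrix V V ℂ) :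
    matJ V * M * matJ V = (∑ i, ∑ j, M i j) • matJ V := by
  ext i j
  simp only [Matrix.mul_apply, matJ, Matrix.of_apply, Matrix.smul_apply, mul_one, one_mul,
    smul_eq_mul]
  rw [Finset.sum_comm]

/-- Auxiliary: a weak isomorphism commutes with the matrix exponential on `W`. -/
theorem aux_weakIso_map_exp {V V' : Type*}
    [Fintype V] [DecidableEq V] [Fintype V'] [DecidableEq V']
    (W : Subalgebra ℂ (Matrix V V ℂ)) (W' : Subalgebra ℂ (Matrix V' V' ℂ))
    (φ : Matrix V V ℂ → Matrix V' V' ℂ) (hφ : IsWeakIso W W' φ)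
    (A : Matrix V V ℂ) (hA : A ∈ W) :
    φ (NormedSpace.exp A) = NormedSpace.exp (φ A) := by
  obtain ⟨hbij, hadd, hsmul, hmul, _, _⟩ := hφ
  have h0 : φ 0 = 0 := by
    have := hsmul 0 0 (zero_mem W)
    simpa using this
  have h1 : φ 1 = 1 := by
    obtain ⟨A₁, hA₁, hA₁'⟩ :=
      hbij.surjOn (show (1 : Matrix V' V' ℂ) ∈ (W' : Set _) from one_mem W')
    have := hmul A₁ hA₁ 1 (one_mem W)
    rw [mul_one, hA₁'] at this
    rw [one_mul] at this
    exact this.symm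
  haveI : FiniteDimensional ℂ W :=
    FiniteDimensional.finiteDimensional_submodule (Subalgebra.toSubmodule W)
  letI : SeminormedRing (Matrix V V ℂ) := Matrix.linftyOpSemiNormedRing
  letI : NormedRing (Matrix V V ℂ) := Matrix.linftyOpNormedRing
  letI : NormedAlgebra ℂ (Matrix V V ℂ) := Matrix.linftyOpNormedAlgebra
  letI : SeminormedRing (Matrix V' V' ℂ) := Matrix.linftyOpSemiNormedRing
  letI : NormedRing (Matrix V' V' ℂ) := Matrix.linftyOpNormedRing
  letI : NormedAlgebra ℂ (Matrix V' V' ℂ) := Matrix.linftyOpNormedAlgebra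
  letI : NormedRing W := SubringClass.toNormedRing W
  letI : NormedAlgebra ℂ W := Subalgebra.toNormedAlgebra W
  letI hq : NormedAlgebra ℚ W := NormedAlgebra.restrictScalars ℚ ℂ W
  letI : UniformSpace W := PseudoMetricSpace.toUniformSpace
  letI : TopologicalSpace W := UniformSpace.toTopologicalSpace
  haveI : CompleteSpace W := FiniteDimensional.complete ℂ W
  let ψ : W →+* Matrix V' V' ℂ :=
    { toFun := fun a => φ a.val
      map_one' := h1
      map_mul' := fun a b => hmul a.val a.property b.val b.property
      map_zero' := h0
      map_add' := fun a b => hadd a.val a.property b.val b.property }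
  have hψlin : IsLinearMap ℂ ψ := ⟨ψ.map_add, fun c a => by
    show φ ((c • a : W) : Matrix V V ℂ) = c • φ a.val
    rw [Subalgebra.coe_smul]
    exact hsmul c a.val a.property⟩
  have hψcont : Continuous ψ := (hψlin.mk' ψ).continuous_of_finiteDimensional
  have hval : Continuous (W.val : W →ₐ[ℂ] Matrix V V ℂ) := continuous_subtype_val
  have e1 : NormedSpace.exp A = W.val (NormedSpace.exp (⟨A, hA⟩ : W)) := by
    rw [@NormedSpace.map_exp W (Matrix V V ℂ) _ hq _ _ _ _ _ _ (W.val : W →ₐ[ℂ] Matrix V V ℂ) hval]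
    rfl
  rw [e1]
  have e2 : φ (W.val (NormedSpace.exp (⟨A, hA⟩ : W)))
      = ψ (NormedSpace.exp (⟨A, hA⟩ : W)) := rfl
  rw [e2, @NormedSpace.map_exp W (Matrix V' V' ℂ) _ hq _ _ _ _ _ _ ψ hψcont]
  rfl

/-- expanding exp(-itH) in the 0-1 basis, the Green's function values of H'
are the same coefficients against the image basis, with the same multiplicities
tr(R Rᵀ) = tr(φ(R) φ(R)ᵀ). -/
theorem weakIso_greens_functions {V V' : Type*}
    [Fintype V] [DecidableEq V] [Fintype V'] [DecidableEq V']
    (W : Subalgebra ℂ (Matrix V V ℂ)) (W' : Subalgebra ℂ (Matrix V' V' ℂ))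
    (hW : IsCellular W) (hW' : IsCellular W')
    (B : Finset (Matrix V V ℂ)) (hB : Is01Basis W B)
    (B' : Finset (Matrix V' V' ℂ)) (hB' : Is01Basis W' B')
    (H : Matrix V V ℂ) (H' : Matrix V' V' ℂ) (hH : H ∈ W) (hH' : H' ∈ W')
    (φ : Matrix V V ℂ → Matrix V' V' ℂ) (hφ : IsWeakIso W W' φ)
    (hφB : Set.BijOn φ (B : Set (Matrix V V ℂ)) (B' : Set (Matrix V' V' ℂ)))
    (hφH : φ H = H') :
    (∀ t : ℝ, ∀ x : Matrix V V ℂ → ℂ,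
      NormedSpace.exp ((-(Complex.I * t)) • H) = (∑ R ∈ B, x R • R) →
      NormedSpace.exp ((-(Complex.I * t)) • H') = (∑ R ∈ B, x R • φ R)) ∧
    (∀ R ∈ B, (R * Rᵀ).trace = (φ R * (φ R)ᵀ).trace) := by
  obtain ⟨hbij, hadd, hsmul, hmul, hhad, hct⟩ := hφ
  have h0 : φ 0 = 0 := by
    have := hsmul 0 0 (zero_mem W)
    simpa using this
  -- basis elements belong to W
  have hBW : ∀ R ∈ B, R ∈ W := by
    intro R hR
    have : R ∈ Submodule.span ℂ (B : Set (Matrix V V ℂ)) := Submodule.subset_span hR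
    rw [hB.2.2] at this
    exact this
  constructor
  · intro t x hx
    have hA : ((-(Complex.I * t)) • H) ∈ W := W.smul_mem hH _
    have hφA : φ ((-(Complex.I * t)) • H) = (-(Complex.I * t)) • H' := by
      rw [hsmul _ _ hH, hφH]
    have key := aux_weakIso_map_exp W W' φ ⟨hbij, hadd, hsmul, hmul, hhad, hct⟩
      ((-(Complex.I * t)) • H) hA
    rw [hφA, hx] at key
    rw [← key]
    -- φ of a finite sum of scaled basis elements
    have hsum : ∀ s : Finset (Matrix V V ℂ), (∀ R ∈ s, R ∈ W) →
        φ (∑ R ∈ s, x R • R) = ∑ R ∈ s, x R • φ R := by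
      intro s
      induction s using Finset.induction_on with
      | empty => intro _; simpa using h0
      | @insert R s hRs ih =>
        intro hmem
        have hRW : R ∈ W := hmem R (Finset.mem_insert_self R s)
        have hsW : (∑ r ∈ s, x r • r) ∈ W :=
          sum_mem fun r hr => W.smul_mem (hmem r (Finset.mem_insert_of_mem hr)) _
        rw [Finset.sum_insert hRs, Finset.sum_insert hRs,
          hadd _ (W.smul_mem hRW _) _ hsW, hsmul _ _ hRW,
          ih fun r hr => hmem r (Finset.mem_insert_of_mem hr)]
    exact hsum B hBW
  · intro R hR
    have hRW : R ∈ W := hBW R hR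
    have hR01 : Is01 R := hB.1 R hR
    have hφR' : φ R ∈ B' := hφB.mapsTo hR
    have hφR01 : Is01 (φ R) := hB'.1 (φ R) hφR'
    cases isEmpty_or_nonempty V' with
    | inl hE =>
      exfalso
      have h10 : (1 : Matrix V V ℂ) = 0 := by
        apply hbij.injOn (one_mem W) (zero_mem W)
        ext i j
        exact isEmptyElim i
      have hRz : R = 0 := by
        calc R = R * 1 := (mul_one R).symm
        _ = R * 0 := by rw [h10]
        _ = 0 := mul_zero R
      have hRnz : R ≠ 0 := by
        have := hB.2.1.ne_zero ⟨R, hR⟩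
        simpa using this
      exact hRnz hRz
    | inr hNE =>
      -- φ maps J to J'
      have hφJ : φ (matJ V) = matJ V' := by
        obtain ⟨A₁, hA₁, hA₁'⟩ := hbij.surjOn hW'.2.2
        have hAJ : A₁ ⊙ matJ V = A₁ := by
          ext i j
          simp [Matrix.hadamard, matJ]
        have h := hhad A₁ hA₁ (matJ V) hW.2.2
        rw [hAJ, hA₁'] at h
        -- h : matJ V' = matJ V' ⊙ φ (matJ V)
        ext i j
        have := congrFun (congrFun h i) j
        simp only [Matrix.hadamard_apply, matJ, Matrix.of_apply, one_mul] at this ⊢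
        exact this.symm
      -- apply φ to J R J = s • J
      have hm1 : matJ V * R ∈ W := W.mul_mem hW.2.2 hRW
      have e1 : φ (matJ V * R * matJ V) = matJ V' * φ R * matJ V' := by
        rw [hmul _ hm1 _ hW.2.2, hmul _ hW.2.2 _ hRW, hφJ]
      have e2 : φ (matJ V * R * matJ V) = (∑ i, ∑ j, R i j) • matJ V' := by
        rw [aux_matJ_mul_matJ, hsmul _ _ hW.2.2, hφJ]
      have e3 : matJ V' * φ R * matJ V' = (∑ i, ∑ j, φ R i j) • matJ V' :=
        aux_matJ_mul_matJ (φ R)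
      have e4 : (∑ i, ∑ j, R i j) • matJ V' = (∑ i, ∑ j, φ R i j) • matJ V' := by
        rw [← e2, e1, e3]
      obtain ⟨i0⟩ := hNE
      have e5 : (∑ i, ∑ j, R i j) = ∑ i, ∑ j, φ R i j := by
        have := congrFun (congrFun e4 i0) i0
        simpa [matJ] using this
      rw [aux_trace_mul_transpose_01 R hR01, aux_trace_mul_transpose_01 (φ R) hφR01, e5]
end
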